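/- arXiv:2504.05798 — 2 statements merged into one kernel-verified Lean document; each statement's English description precedes it below -/
import Mathlib

section
/- Let E be ℝⁿ, h > 0, t_k = k·h, and let f : E × ℝ → ℝ with f(·;t) differentiable for each t. Assume: (i) ‖∇_x f(x;t) − ∇_x f(y;t)‖ ≤ L·‖x − y‖ for all x,y,t with L > 0; (ii) f(·;t) is μ-PL on E for all t with 0 < μ ≤ L, where f*(t) := inf_y f(y;t); (iii) X*(t) := argmin_x f(x;t) is nonempty for all t; (iv) ‖∇_x f(x;s) − ∇_x f(x;t)‖ ≤ L_{1,1}|s − t|. Fix α ∈ (0, 2/L), v ≥ 0, set κ := L/μ and θ := 1 − αμ(2 − αL) ∈ [0,1), and let the integer C satisfy C > log(κ)/log(1/θ) (so that κ·θ^C < 1). Let sequences (x̂_k), (x_k) satisfy, for every k ≥ 1: ‖x̂_k − x_{k−1}‖ ≤ v·h and x_k = G_k^C(x̂_k) with G_k(y) = y − α∇_x f(y;t_k). Then: limsup_{k→∞} dist(x̂_k, X*(t_k)) ≤ ((v + L_{1,1}/μ)/(1 − √(κθ^C)))·h, and limsup_{k→∞} ( f(x̂_k; t_k) − f*(t_k)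 ) ≤ (L/2)·((v + L_{1,1}/μ)/(1 − √(κθ^C)))²·h². -/
set_option maxHeartbeats 1000000

open Filter Metric

lemma descent_lemma {E : Type*} [NormedAddCommGroup E] [InnerProductSpace ℝ E]
    (f : E → ℝ) (g : E → E) (L : ℝ) (hL : 0 < L)
    (hgrad : ∀ x, HasFDerivAt f (innerSL ℝ (g x)) x)
    (hlip : ∀ x y, ‖g x - g y‖ ≤ L * ‖x - y‖)
    (x y : E) :
    f y ≤ f x + inner ℝ (g x) (y - x) + L / 2 * ‖y - x‖ ^ 2 := by
  set v := y - x with hv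
  have hg : Continuous g := by
    have : LipschitzWith L.toNNReal g := by
      apply LipschitzWith.of_dist_le_mul
      intro a b
      simpa [dist_eq_norm, Real.coe_toNNReal L hL.le] using hlip a b
    exact this.continuous
  have hpathc : Continuous (fun s : ℝ => x + s • v) := by continuity
  have hφ : ∀ s : ℝ, HasDerivAt (fun s : ℝ => f (x + s • v))
      (inner ℝ (g (x + s • v)) v : ℝ) s := by
    intro s
    have hpath : HasDerivAt (fun s : ℝ => x + s • v) v s := by
      simpa using ((hasDerivAt_id s).smul_const v).const_add x
    simpa [innerSL_apply_apply, Function.comp_def] using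
      (hgrad (x + s • v)).comp_hasDerivAt s hpath
  have hcont : Continuous (fun s : ℝ => (inner ℝ (g (x + s • v)) v : ℝ)) :=
    (hg.comp hpathc).inner continuous_const
  have hint : ∫ s in (0:ℝ)..1, (inner ℝ (g (x + s • v)) v : ℝ) = f y - f x := by
    have := intervalIntegral.integral_eq_sub_of_hasDerivAt
      (f := fun s : ℝ => f (x + s • v)) (f' := fun s => (inner ℝ (g (x + s • v)) v : ℝ))
      (fun s _ => hφ s) (hcont.intervalIntegrable 0 1)
    simpa [hv] using this
  have hmono : ∫ s in (0:ℝ)..1, (inner ℝ (g (x + s • v)) v : ℝ)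
      ≤ ∫ s in (0:ℝ)..1, ((inner ℝ (g x) v : ℝ) + (L * ‖v‖ ^ 2) * s) := by
    apply intervalIntegral.integral_mono_on zero_le_one
      (hcont.intervalIntegrable 0 1)
      (Continuous.intervalIntegrable (by continuity : Continuous fun s : ℝ => (inner ℝ (g x) v : ℝ) + (L * ‖v‖ ^ 2) * s) 0 1)
    intro s hs
    have h1 : (inner ℝ (g (x + s • v)) v : ℝ)
        = inner ℝ (g x) v + inner ℝ (g (x + s • v) - g x) v := by
      rw [inner_sub_left]; ring
    rw [h1]
    gcongr _ + ?_
    calc (inner ℝ (g (x + s • v) - g x) v : ℝ) ≤ ‖g (x + s • v) - g x‖ * ‖v‖ :=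
          real_inner_le_norm _ _
      _ ≤ (L * ‖x + s • v - x‖) * ‖v‖ := by
          gcongr; exact hlip _ _
      _ = L * ‖v‖ ^ 2 * s := by
          rw [add_sub_cancel_left, norm_smul, Real.norm_eq_abs, abs_of_nonneg hs.1]
          ring
  have hrhs : ∫ s in (0:ℝ)..1, ((inner ℝ (g x) v : ℝ) + (L * ‖v‖ ^ 2) * s)
      = inner ℝ (g x) v + L / 2 * ‖v‖ ^ 2 := by
    rw [intervalIntegral.integral_add intervalIntegrable_const
      (Continuous.intervalIntegrable (by continuity : Continuous fun s : ℝ => (L * ‖v‖ ^ 2) * s) 0 1),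
      intervalIntegral.integral_const_mul, integral_id, intervalIntegral.integral_const]
    simp; ring
  linarith [hint ▸ hmono, hrhs ▸ hmono]

lemma sqrt_pow_aux (x : ℝ) (hx : 0 ≤ x) (n : ℕ) :
    Real.sqrt (x ^ n) = Real.sqrt x ^ n := by
  induction n with
  | zero => simp
  | succ m ih => rw [pow_succ, pow_succ, Real.sqrt_mul (pow_nonneg hx m), ih]

/-- One gradient-descent step decreases the function value. -/
lemma gd_step_decrease {E : Type*} [NormedAddCommGroup E] [InnerProductSpace ℝ E]
    (f : E → ℝ) (g : E → E) (L : ℝ) (hL : 0 < L)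
    (hgrad : ∀ x, HasFDerivAt f (innerSL ℝ (g x)) x)
    (hlip : ∀ x y, ‖g x - g y‖ ≤ L * ‖x - y‖)
    (a : ℝ) (ha : 0 < a) (z : E) :
    f (z - a • g z) ≤ f z - a * (1 - a * L / 2) * ‖g z‖ ^ 2 := by
  have hd := descent_lemma f g L hL hgrad hlip z (z - a • g z)
  have h1 : z - a • g z - z = -(a • g z) := by abel
  rw [h1] at hd
  have h2 : (inner ℝ (g z) (-(a • g z)) : ℝ) = -(a * ‖g z‖ ^ 2) := by
    rw [inner_neg_right, real_inner_smul_right, real_inner_self_eq_norm_sq]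
  have h3 : ‖-(a • g z)‖ ^ 2 = a ^ 2 * ‖g z‖ ^ 2 := by
    rw [norm_neg, norm_smul, Real.norm_eq_abs, abs_of_pos ha, mul_pow]
  rw [h2, h3] at hd
  nlinarith [hd]

/-- Path-length bound: distance to argmin via gradient-descent path. -/
lemma pl_path_bound {E : Type*} [NormedAddCommGroup E] [InnerProductSpace ℝ E]
    [CompleteSpace E]
    (f : E → ℝ) (g : E → E) (μ L : ℝ) (hμ : 0 < μ) (hμL : μ ≤ L)
    (hgrad : ∀ x, HasFDerivAt f (innerSL ℝ (g x)) x)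
    (hlip : ∀ x y, ‖g x - g y‖ ≤ L * ‖x - y‖)
    (hpl : ∀ x, f x - (⨅ y, f y) ≤ 1 / (2 * μ) * ‖g x‖ ^ 2)
    (hne : {z | ∀ y, f z ≤ f y}.Nonempty)
    (a : ℝ) (ha : 0 < a) (haL : a * L ≤ 1) (x : E) :
    Metric.infDist x {z | ∀ y, f z ≤ f y} * ((1 - a * L / 2) * Real.sqrt (μ / 2))
      ≤ Real.sqrt (f x - ⨅ y, f y) := by
  have hL : 0 < L := lt_of_lt_of_le hμ hμL
  obtain ⟨m, hm⟩ := hne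
  have hbdd : BddBelow (Set.range f) := ⟨f m, by rintro _ ⟨z, rfl⟩; exact hm z⟩
  have hFle : ∀ z, (⨅ y, f y) ≤ f z := fun z => ciInf_le hbdd z
  obtain ⟨y, hy0, hysucc⟩ : ∃ y : ℕ → E, y 0 = x ∧
      ∀ j, y (j + 1) = y j - a • g (y j) :=
    ⟨fun j => (fun z => z - a • g z)^[j] x, rfl,
      fun j => Function.iterate_succ_apply' _ j x⟩
  obtain ⟨Δ, hΔdef⟩ : ∃ Δ : ℕ → ℝ, ∀ j, Δ j = f (y j) - ⨅ y, f y :=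
    ⟨_, fun j => rfl⟩
  have hΔ0 : ∀ j, 0 ≤ Δ j := fun j => (hΔdef j) ▸ sub_nonneg.2 (hFle _)
  obtain ⟨c, hcdef⟩ : ∃ c : ℝ, c = 1 - a * L / 2 := ⟨_, rfl⟩
  have hcpos : 0 < c := by rw [hcdef]; nlinarith
  have hc1 : c ≤ 1 := by rw [hcdef]; nlinarith [mul_pos ha hL]
  have hdesc : ∀ j, f (y (j + 1)) ≤ f (y j) - a * c * ‖g (y j)‖ ^ 2 := by
    intro j
    rw [hysucc j, hcdef]
    exact gd_step_decrease f g L hL hgrad hlip a ha (y j)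
  obtain ⟨θ, hθdef⟩ : ∃ θ : ℝ, θ = 1 - 2 * μ * a * c := ⟨_, rfl⟩
  have hθ0 : 0 ≤ θ := by
    rw [hθdef, hcdef]
    nlinarith [sq_nonneg (a * L - 1), mul_pos ha hL, sq_nonneg (a*L)]
  have hθ1 : θ < 1 := by
    have := mul_pos (mul_pos (mul_pos two_pos hμ) ha) hcpos
    rw [hθdef]; linarith
  have hgsq : ∀ j, 2 * μ * Δ j ≤ ‖g (y j)‖ ^ 2 := by
    intro j
    have h1 := hpl (y j)
    rw [← hΔdef j] at h1
    have h2μ : 0 < 2 * μ := by linarith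
    rw [div_mul_eq_mul_div, one_mul, le_div_iff₀ h2μ] at h1
    nlinarith [h1]
  have hΔrec : ∀ j, Δ (j + 1) ≤ θ * Δ j := by
    intro j
    have h1 := hdesc j
    rw [← sub_le_sub_iff_right (⨅ y, f y), ← hΔdef (j+1)] at h1
    have h2 := hgsq j
    have hac : 0 < a * c := mul_pos ha hcpos
    rw [hθdef]
    nlinarith [mul_le_mul_of_nonneg_left h2 hac.le, hΔdef j, hΔdef (j+1)]
  have hΔgeo : ∀ j, Δ j ≤ θ ^ j * Δ 0 := by
    intro j
    induction j with
    | zero => simp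
    | succ m ih =>
      calc Δ (m + 1) ≤ θ * Δ m := hΔrec m
        _ ≤ θ * (θ ^ m * Δ 0) := mul_le_mul_of_nonneg_left ih hθ0
        _ = θ ^ (m + 1) * Δ 0 := by ring
  -- key per-step inequality
  obtain ⟨r, hrdef⟩ : ∃ r : ℝ, r = Real.sqrt (μ / 2) := ⟨_, rfl⟩
  have hrpos : 0 < r := hrdef ▸ Real.sqrt_pos.2 (by linarith)
  have hr2 : r ^ 2 = μ / 2 := by rw [hrdef]; exact Real.sq_sqrt (by linarith)
  have hkey : ∀ j, a * c * r * ‖g (y j)‖ ≤ Real.sqrt (Δ j) - Real.sqrt (Δ (j + 1)) := by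
    intro j
    have hG0 : (0:ℝ) ≤ ‖g (y j)‖ := norm_nonneg _
    have hstep : Δ (j + 1) ≤ Δ j - a * c * ‖g (y j)‖ ^ 2 := by
      have := hdesc j
      rw [hΔdef (j+1), hΔdef j]
      linarith
    have hpq : Real.sqrt (Δ (j + 1)) ≤ Real.sqrt (Δ j) := by
      apply Real.sqrt_le_sqrt
      nlinarith [hstep, mul_pos ha hcpos, sq_nonneg ‖g (y j)‖]
    rcases eq_or_lt_of_le hG0 with hG0' | hGpos
    · rw [← hG0']
      simpa using hpq
    obtain ⟨p, hpdef⟩ : ∃ p : ℝ, p = Real.sqrt (Δ j) := ⟨_, rfl⟩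
    obtain ⟨q, hqdef⟩ : ∃ q : ℝ, q = Real.sqrt (Δ (j + 1)) := ⟨_, rfl⟩
    rw [← hpdef, ← hqdef]
    rw [← hpdef, ← hqdef] at hpq
    have hp2 : p ^ 2 = Δ j := by rw [hpdef]; exact Real.sq_sqrt (hΔ0 j)
    have hq2 : q ^ 2 = Δ (j + 1) := by rw [hqdef]; exact Real.sq_sqrt (hΔ0 (j + 1))
    have hp0 : 0 ≤ p := hpdef ▸ Real.sqrt_nonneg _
    have hq0 : 0 ≤ q := hqdef ▸ Real.sqrt_nonneg _
    have hpG : 2 * r * p ≤ ‖g (y j)‖ := by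
      have h2 : (2 * r * p) ^ 2 ≤ ‖g (y j)‖ ^ 2 := by
        have h1 := hgsq j
        nlinarith [h1, hp2, hr2]
      have h3 := Real.sqrt_le_sqrt h2
      rwa [Real.sqrt_sq (by positivity), Real.sqrt_sq hG0] at h3
    have h4 : a * c * ‖g (y j)‖ ^ 2 ≤ (p - q) * (p + q) := by nlinarith [hstep, hp2, hq2]
    have h3 : (p + q) * r ≤ ‖g (y j)‖ := by nlinarith [hpG, hpq, hrpos.le]
    have h7 : a * c * r * ‖g (y j)‖ * ‖g (y j)‖ ≤ (p - q) * ‖g (y j)‖ := by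
      have h5 : (p - q) * ((p + q) * r) ≤ (p - q) * ‖g (y j)‖ :=
        mul_le_mul_of_nonneg_left h3 (by linarith)
      have h6 : (a * c * ‖g (y j)‖ ^ 2) * r ≤ ((p - q) * (p + q)) * r :=
        mul_le_mul_of_nonneg_right h4 hrpos.le
      linarith [h5, h6]
    nlinarith [h7, hGpos]
  -- telescoping path bound
  have hdist : ∀ j, dist (y j) (y (j + 1)) = a * ‖g (y j)‖ := by
    intro j
    rw [dist_eq_norm, hysucc j]
    have h1 : y j - (y j - a • g (y j)) = a • g (y j) := by abel
    rw [h1, norm_smul, Real.norm_eq_abs, abs_of_pos ha]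
  have htel : ∀ N, dist x (y N) * (c * r) ≤ Real.sqrt (Δ 0) := by
    intro N
    have h1 : dist x (y N) ≤ ∑ j ∈ Finset.range N, dist (y j) (y (j + 1)) := by
      have := dist_le_range_sum_dist y N
      rwa [hy0] at this
    have h2 : ∑ j ∈ Finset.range N, dist (y j) (y (j + 1)) * (c * r)
        ≤ ∑ j ∈ Finset.range N, (Real.sqrt (Δ j) - Real.sqrt (Δ (j + 1))) := by
      apply Finset.sum_le_sum
      intro j _
      rw [hdist j]
      nlinarith [hkey j]
    rw [Finset.sum_range_sub' (fun j => Real.sqrt (Δ j)) N] at h2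
    have h3 : dist x (y N) * (c * r)
        ≤ ∑ j ∈ Finset.range N, dist (y j) (y (j + 1)) * (c * r) := by
      rw [← Finset.sum_mul]
      exact mul_le_mul_of_nonneg_right h1 (by positivity)
    have h4 : Real.sqrt (Δ 0) - Real.sqrt (Δ N) ≤ Real.sqrt (Δ 0) := by
      have := Real.sqrt_nonneg (Δ N); linarith
    linarith
  -- Cauchy sequence
  have hcauchy : CauchySeq y := by
    apply cauchySeq_of_le_geometric (Real.sqrt θ) (a * Real.sqrt (Δ 0 / (a * c)))
    · rw [show (1:ℝ) = Real.sqrt 1 by simp]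
      exact Real.sqrt_lt_sqrt hθ0 hθ1
    · intro j
      rw [hdist j]
      have hac : 0 < a * c := mul_pos ha hcpos
      have h1 : ‖g (y j)‖ ^ 2 ≤ θ ^ j * Δ 0 / (a * c) := by
        have h2 : a * c * ‖g (y j)‖ ^ 2 ≤ Δ j := by
          have h5 := hdesc j
          have h6 := hΔ0 (j + 1)
          rw [hΔdef (j+1)] at h6
          rw [hΔdef j]
          linarith
        rw [le_div_iff₀ hac]
        nlinarith [h2, hΔgeo j]
      have h3 : ‖g (y j)‖ ≤ Real.sqrt (θ ^ j * Δ 0 / (a * c)) := by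
        have := Real.sqrt_le_sqrt h1
        rwa [Real.sqrt_sq (norm_nonneg _)] at this
      have h4 : Real.sqrt (θ ^ j * Δ 0 / (a * c))
          = Real.sqrt (Δ 0 / (a * c)) * Real.sqrt θ ^ j := by
        rw [mul_div_assoc, Real.sqrt_mul (pow_nonneg hθ0 j), sqrt_pow_aux θ hθ0 j]
        ring
      calc a * ‖g (y j)‖ ≤ a * (Real.sqrt (Δ 0 / (a * c)) * Real.sqrt θ ^ j) := by
            rw [← h4]; exact mul_le_mul_of_nonneg_left h3 ha.le
        _ = a * Real.sqrt (Δ 0 / (a * c)) * Real.sqrt θ ^ j := by ring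
  obtain ⟨yb, hylim⟩ := cauchySeq_tendsto_of_complete hcauchy
  -- limit is a minimizer
  have hfcont : Continuous f :=
    continuous_iff_continuousAt.2 fun z => (hgrad z).continuousAt
  have hΔtend : Tendsto Δ atTop (nhds 0) := by
    apply squeeze_zero hΔ0 hΔgeo
    simpa using (tendsto_pow_atTop_nhds_zero_of_lt_one hθ0 hθ1).mul_const (Δ 0)
  have hfy : Tendsto (fun N => f (y N)) atTop (nhds (⨅ y, f y)) := by
    have he : (fun N => f (y N)) = fun N => Δ N + ⨅ y, f y := by
      funext N; rw [hΔdef N]; ring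
    rw [he]
    simpa using hΔtend.add_const (⨅ y, f y)
  have hfyb : f yb = ⨅ y, f y :=
    tendsto_nhds_unique (hfcont.continuousAt.tendsto.comp hylim) hfy
  have hybS : yb ∈ {z | ∀ y, f z ≤ f y} := by
    intro z
    rw [hfyb]
    exact hFle z
  -- conclude
  have hdyb : dist x yb * (c * r) ≤ Real.sqrt (Δ 0) := by
    have h1 : Tendsto (fun N => dist x (y N) * (c * r)) atTop
        (nhds (dist x yb * (c * r))) :=
      (tendsto_const_nhds.dist hylim).mul_const _
    exact le_of_tendsto h1 (Filter.Eventually.of_forall htel)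
  have h2 : Metric.infDist x {z | ∀ y, f z ≤ f y} ≤ dist x yb :=
    Metric.infDist_le_dist_of_mem hybS
  have h3 : Δ 0 = f x - ⨅ y, f y := by rw [hΔdef 0, hy0]
  rw [← hcdef, ← hrdef]
  calc Metric.infDist x {z | ∀ y, f z ≤ f y} * (c * r) ≤ dist x yb * (c * r) :=
        mul_le_mul_of_nonneg_right h2 (by positivity)
    _ ≤ Real.sqrt (Δ 0) := hdyb
    _ = Real.sqrt (f x - ⨅ y, f y) := by rw [h3]

/-- PL implies quadratic growth: `dist(x, X*) ≤ √((2/μ)(f x − f*))`. -/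
lemma pl_qg {E : Type*} [NormedAddCommGroup E] [InnerProductSpace ℝ E]
    [CompleteSpace E]
    (f : E → ℝ) (g : E → E) (μ L : ℝ) (hμ : 0 < μ) (hμL : μ ≤ L)
    (hgrad : ∀ x, HasFDerivAt f (innerSL ℝ (g x)) x)
    (hlip : ∀ x y, ‖g x - g y‖ ≤ L * ‖x - y‖)
    (hpl : ∀ x, f x - (⨅ y, f y) ≤ 1 / (2 * μ) * ‖g x‖ ^ 2)
    (hne : {z | ∀ y, f z ≤ f y}.Nonempty)
    (x : E) :
    Metric.infDist x {z | ∀ y, f z ≤ f y}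
      ≤ Real.sqrt (2 / μ * (f x - ⨅ y, f y)) := by
  have hL : 0 < L := lt_of_lt_of_le hμ hμL
  have hΔnn : 0 ≤ f x - ⨅ y, f y := by
    obtain ⟨m, hm⟩ := hne
    have hbdd : BddBelow (Set.range f) := ⟨f m, by rintro _ ⟨z, rfl⟩; exact hm z⟩
    have := ciInf_le hbdd x
    linarith
  have hbound : ∀ m : ℕ,
      Metric.infDist x {z | ∀ y, f z ≤ f y}
        * ((1 - (1 / L) / ((m : ℝ) + 1) * L / 2) * Real.sqrt (μ / 2))
      ≤ Real.sqrt (f x - ⨅ y, f y) := by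
    intro m
    refine pl_path_bound f g μ L hμ hμL hgrad hlip hpl hne ((1 / L) / ((m : ℝ) + 1)) (div_pos (one_div_pos.2 hL) (by positivity)) ?_ x
    have hm1 : (1:ℝ) ≤ (m : ℝ) + 1 := by have := Nat.cast_nonneg (α := ℝ) m; linarith
    rw [div_div, div_mul_eq_mul_div, one_mul, div_le_one (by positivity)]
    nlinarith [hm1, hL]
  have h0 : Filter.Tendsto (fun m : ℕ => (1 / L) / ((m : ℝ) + 1)) atTop (nhds 0) := by
    have := tendsto_one_div_add_atTop_nhds_zero_nat.mul_const (1 / L)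
    simpa [div_eq_mul_inv, mul_comm, mul_assoc, mul_left_comm] using this
  have htend : Filter.Tendsto
      (fun m : ℕ => Metric.infDist x {z | ∀ y, f z ≤ f y}
        * ((1 - (1 / L) / ((m : ℝ) + 1) * L / 2) * Real.sqrt (μ / 2)))
      atTop (nhds (Metric.infDist x {z | ∀ y, f z ≤ f y} * Real.sqrt (μ / 2))) := by
    have hcont : Continuous (fun a : ℝ =>
        Metric.infDist x {z | ∀ y, f z ≤ f y} * ((1 - a * L / 2) * Real.sqrt (μ / 2))) := by
      continuity
    have := (hcont.tendsto 0).comp h0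
    simpa [Function.comp_def] using this
  have hDr : Metric.infDist x {z | ∀ y, f z ≤ f y} * Real.sqrt (μ / 2)
      ≤ Real.sqrt (f x - ⨅ y, f y) :=
    le_of_tendsto htend (Filter.Eventually.of_forall hbound)
  have hrr : Real.sqrt (μ / 2) * Real.sqrt (2 / μ) = 1 := by
    rw [← Real.sqrt_mul (by positivity)]
    rw [show (μ / 2) * (2 / μ) = 1 by field_simp]
    simp
  calc Metric.infDist x {z | ∀ y, f z ≤ f y}
      = Metric.infDist x {z | ∀ y, f z ≤ f y} * (Real.sqrt (μ / 2) * Real.sqrt (2 / μ)) := by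
        rw [hrr, mul_one]
    _ = (Metric.infDist x {z | ∀ y, f z ≤ f y} * Real.sqrt (μ / 2)) * Real.sqrt (2 / μ) := by
        ring
    _ ≤ Real.sqrt (f x - ⨅ y, f y) * Real.sqrt (2 / μ) :=
        mul_le_mul_of_nonneg_right hDr (Real.sqrt_nonneg _)
    _ = Real.sqrt (2 / μ * (f x - ⨅ y, f y)) := by
        rw [← Real.sqrt_mul hΔnn, mul_comm]

lemma grad_zero_at_min {E : Type*} [NormedAddCommGroup E] [InnerProductSpace ℝ E]
    (f : E → ℝ) (g : E → E)
    (hgrad : ∀ x, HasFDerivAt f (innerSL ℝ (g x)) x)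
    (z : E) (hz : ∀ y, f z ≤ f y) : g z = 0 := by
  have hmin : IsLocalMin f z := Filter.Eventually.of_forall hz
  have h0 := hmin.hasFDerivAt_eq_zero (hgrad z)
  have h2 : (inner ℝ (g z) (g z) : ℝ) = 0 := by
    have := congrArg (fun T : E →L[ℝ] ℝ => T (g z)) h0
    simpa [innerSL_apply_apply] using this
  exact inner_self_eq_zero.1 h2

lemma argmin_closed {E : Type*} [NormedAddCommGroup E] [InnerProductSpace ℝ E]
    (f : E → ℝ) (g : E → E)
    (hgrad : ∀ x, HasFDerivAt f (innerSL ℝ (g x)) x) :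
    IsClosed {z : E | ∀ y, f z ≤ f y} := by
  have hfcont : Continuous f :=
    continuous_iff_continuousAt.2 fun z => (hgrad z).continuousAt
  have he : {z : E | ∀ y, f z ≤ f y} = ⋂ y, {z | f z ≤ f y} := by
    ext w; simp [Set.mem_iInter]
  rw [he]
  exact isClosed_iInter fun y => isClosed_le hfcont continuous_const

lemma gap_le_dist_sq {E : Type*} [NormedAddCommGroup E] [InnerProductSpace ℝ E]
    [ProperSpace E]
    (f : E → ℝ) (g : E → E) (L : ℝ) (hL : 0 < L)
    (hgrad : ∀ x, HasFDerivAt f (innerSL ℝ (g x)) x)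
    (hlip : ∀ x y, ‖g x - g y‖ ≤ L * ‖x - y‖)
    (hne : {z : E | ∀ y, f z ≤ f y}.Nonempty) (x : E) :
    f x - (⨅ y, f y) ≤ L / 2 * Metric.infDist x {z | ∀ y, f z ≤ f y} ^ 2 := by
  obtain ⟨z, hzS, hzd⟩ :=
    (argmin_closed f g hgrad).exists_infDist_eq_dist hne x
  have hgz : g z = 0 := grad_zero_at_min f g hgrad z hzS
  have hd := descent_lemma f g L hL hgrad hlip z x
  rw [hgz] at hd
  simp only [inner_zero_left, add_zero] at hd
  have hzF : f z ≤ ⨅ y, f y := le_ciInf hzS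
  rw [hzd, dist_eq_norm]
  linarith [hd]

lemma gd_iter_gap {E : Type*} [NormedAddCommGroup E] [InnerProductSpace ℝ E]
    (f : E → ℝ) (g : E → E) (μ L : ℝ) (hμ : 0 < μ) (hμL : μ ≤ L)
    (hgrad : ∀ x, HasFDerivAt f (innerSL ℝ (g x)) x)
    (hlip : ∀ x y, ‖g x - g y‖ ≤ L * ‖x - y‖)
    (hpl : ∀ x, f x - (⨅ y, f y) ≤ 1 / (2 * μ) * ‖g x‖ ^ 2)
    (hne : {z : E | ∀ y, f z ≤ f y}.Nonempty)
    (a : ℝ) (ha : 0 < a) (haL : a * L < 2) (C : ℕ) (z : E) :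
    f ((fun y => y - a • g y)^[C] z) - (⨅ y, f y)
      ≤ (1 - a * μ * (2 - a * L)) ^ C * (f z - ⨅ y, f y) := by
  have hL : 0 < L := lt_of_lt_of_le hμ hμL
  obtain ⟨m, hm⟩ := hne
  have hbdd : BddBelow (Set.range f) := ⟨f m, by rintro _ ⟨w, rfl⟩; exact hm w⟩
  have hFle : ∀ w, (⨅ y, f y) ≤ f w := fun w => ciInf_le hbdd w
  have hθ0 : 0 ≤ 1 - a * μ * (2 - a * L) := by
    nlinarith [sq_nonneg (a * L - 1), mul_pos ha hL]
  have hstep : ∀ w : E, f (w - a • g w) - (⨅ y, f y)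
      ≤ (1 - a * μ * (2 - a * L)) * (f w - ⨅ y, f y) := by
    intro w
    have hd := gd_step_decrease f g L hL hgrad hlip a ha w
    have hp := hpl w
    have h2μ : 0 < 2 * μ := by linarith
    rw [div_mul_eq_mul_div, one_mul, le_div_iff₀ h2μ] at hp
    have hc : 0 ≤ a * (1 - a * L / 2) := by nlinarith
    nlinarith [mul_le_mul_of_nonneg_left hp hc, hFle (w - a • g w), hFle w]
  induction C with
  | zero => simp
  | succ m ih =>
    rw [Function.iterate_succ_apply']
    calc f ((fun y => y - a • g y) ((fun y => y - a • g y)^[m] z)) - (⨅ y, f y)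
        ≤ (1 - a * μ * (2 - a * L)) * (f ((fun y => y - a • g y)^[m] z) - ⨅ y, f y) :=
          hstep _
      _ ≤ (1 - a * μ * (2 - a * L)) * ((1 - a * μ * (2 - a * L)) ^ m * (f z - ⨅ y, f y)) :=
          mul_le_mul_of_nonneg_left ih hθ0
      _ = (1 - a * μ * (2 - a * L)) ^ (m + 1) * (f z - ⨅ y, f y) := by ring

/-- Asymptotic tracking error of the SHARP algorithm for `μ`-PL objectives:
`limsup_k dist(x̂_k, X*(t_k)) ≤ (v + L₁₁/μ)h/(1 − √(κθ^C))` and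
`limsup_k (f(x̂_k;t_k) − f*(t_k)) ≤ (L/2)((v + L₁₁/μ)/(1 − √(κθ^C)))²h²`,
where `κ = L/μ`, `θ = 1 − αμ(2 − αL)`, and `C > log κ / log(1/θ)`. -/
theorem sharp_pl_tracking_error
    (n : ℕ) (h : ℝ) (hh : 0 < h)
    (f : EuclideanSpace ℝ (Fin n) → ℝ → ℝ)
    (g : EuclideanSpace ℝ (Fin n) → ℝ → EuclideanSpace ℝ (Fin n))
    (hgrad : ∀ (x : EuclideanSpace ℝ (Fin n)) (t : ℝ),
      HasFDerivAt (fun y => f y t) (innerSL ℝ (g x t)) x)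
    (μ L L11 : ℝ) (hμ : 0 < μ) (hμL : μ ≤ L) (hL11 : 0 ≤ L11)
    (hlipx : ∀ (x y : EuclideanSpace ℝ (Fin n)) (t : ℝ),
      ‖g x t - g y t‖ ≤ L * ‖x - y‖)
    (hpl : ∀ (x : EuclideanSpace ℝ (Fin n)) (t : ℝ),
      f x t - (⨅ y, f y t) ≤ 1 / (2 * μ) * ‖g x t‖ ^ 2)
    (hne : ∀ t : ℝ, {x | ∀ y, f x t ≤ f y t}.Nonempty)
    (hlipt : ∀ (x : EuclideanSpace ℝ (Fin n)) (s t : ℝ),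
      ‖g x s - g x t‖ ≤ L11 * |s - t|)
    (α : ℝ) (hα0 : 0 < α) (hα2 : α < 2 / L) (v : ℝ) (hv : 0 ≤ v)
    (C : ℕ) (hC : Real.log (L / μ) / Real.log (1 / (1 - α * μ * (2 - α * L))) < C)
    (xhat xc : ℕ → EuclideanSpace ℝ (Fin n))
    (hacc : ∀ k : ℕ, 1 ≤ k → ‖xhat k - xc (k - 1)‖ ≤ v * h)
    (hcorr : ∀ k : ℕ, 1 ≤ k →
      xc k = (fun y => y - α • g y ((k : ℝ) * h))^[C] (xhat k)) :
    Filter.limsup (fun k : ℕ =>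
        Metric.infDist (xhat k) {x | ∀ y, f x ((k : ℝ) * h) ≤ f y ((k : ℝ) * h)})
      Filter.atTop
      ≤ (v + L11 / μ) / (1 - Real.sqrt (L / μ * (1 - α * μ * (2 - α * L)) ^ C)) * h ∧
    Filter.limsup (fun k : ℕ =>
        f (xhat k) ((k : ℝ) * h) - (⨅ y, f y ((k : ℝ) * h)))
      Filter.atTop
      ≤ L / 2 *
          ((v + L11 / μ) / (1 - Real.sqrt (L / μ * (1 - α * μ * (2 - α * L)) ^ C))) ^ 2
          * h ^ 2 := by
  have hL : 0 < L := lt_of_lt_of_le hμ hμL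
  have hαL : α * L < 2 := by
    rw [lt_div_iff₀ hL] at hα2; linarith
  obtain ⟨θ, hθdef⟩ : ∃ θ : ℝ, θ = 1 - α * μ * (2 - α * L) := ⟨_, rfl⟩
  have hθ0 : 0 ≤ θ := by
    rw [hθdef]; nlinarith [sq_nonneg (α * L - 1), mul_pos hα0 hL]
  have hθ1 : θ < 1 := by
    rw [hθdef]; nlinarith [mul_pos hα0 hμ]
  rw [← hθdef] at hC ⊢
  obtain ⟨ρ, hρdef⟩ : ∃ ρ : ℝ, ρ = Real.sqrt (L / μ * θ ^ C) := ⟨_, rfl⟩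
  rw [← hρdef]
  have hρ0 : 0 ≤ ρ := hρdef ▸ Real.sqrt_nonneg _
  have hκθ : L / μ * θ ^ C < 1 := by
    rcases eq_or_lt_of_le hθ0 with hz | hθpos
    · have hC0 : C ≠ 0 := by
        rintro rfl
        rw [← hz] at hC
        norm_num [div_zero, Real.log_zero] at hC
      rw [← hz, zero_pow hC0, mul_zero]
      norm_num
    · have hκpos : 0 < L / μ := div_pos hL hμ
      have hlog : 0 < Real.log (1 / θ) := by
        apply Real.log_pos
        rw [one_div]
        exact (one_lt_inv_iff₀).2 ⟨hθpos, hθ1⟩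
      rw [div_lt_iff₀ hlog] at hC
      rw [one_div, Real.log_inv] at hC
      have hlt : Real.log (L / μ * θ ^ C) < 0 := by
        rw [Real.log_mul hκpos.ne' (pow_pos hθpos C).ne', Real.log_pow]
        nlinarith [hC]
      exact (Real.log_neg_iff (by positivity)).1 hlt
  have hρ1 : ρ < 1 := by
    rw [hρdef, show (1:ℝ) = Real.sqrt 1 by simp]
    exact Real.sqrt_lt_sqrt (by positivity) hκθ
  have hden : 0 < 1 - ρ := by linarith
  obtain ⟨B, hBdef⟩ : ∃ B : ℝ, B = v + L11 / μ := ⟨_, rfl⟩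
  rw [← hBdef]
  have hB0 : 0 ≤ B := by rw [hBdef]; positivity
  -- instantiated facts
  have hqg : ∀ (t : ℝ) (x : EuclideanSpace ℝ (Fin n)),
      Metric.infDist x {z | ∀ y, f z t ≤ f y t}
        ≤ Real.sqrt (2 / μ * (f x t - ⨅ y, f y t)) := fun t x =>
    pl_qg (fun x => f x t) (fun x => g x t) μ L hμ hμL
      (fun x => hgrad x t) (fun x y => hlipx x y t) (fun x => hpl x t) (hne t) x
  have hgap : ∀ (t : ℝ) (x : EuclideanSpace ℝ (Fin n)),
      f x t - (⨅ y, f y t) ≤ L / 2 * Metric.infDist x {z | ∀ y, f z t ≤ f y t} ^ 2 :=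
    fun t x =>
    gap_le_dist_sq (fun x => f x t) (fun x => g x t) L hL
      (fun x => hgrad x t) (fun x y => hlipx x y t) (hne t) x
  have hgapnn : ∀ (t : ℝ) (x : EuclideanSpace ℝ (Fin n)),
      0 ≤ f x t - ⨅ y, f y t := by
    intro t x
    obtain ⟨m, hm⟩ := hne t
    have hbdd : BddBelow (Set.range fun y => f y t) :=
      ⟨f m t, by rintro _ ⟨z, rfl⟩; exact hm z⟩
    have := ciInf_le hbdd x
    linarith
  -- drift of the argmin set
  have hdrift : ∀ (s t : ℝ) (x : EuclideanSpace ℝ (Fin n)),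
      Metric.infDist x {z | ∀ y, f z t ≤ f y t}
        ≤ Metric.infDist x {z | ∀ y, f z s ≤ f y s} + L11 / μ * |s - t| := by
    intro s t x
    obtain ⟨z, hzS, hzd⟩ :=
      (argmin_closed (fun x => f x s) (fun x => g x s)
        (fun x => hgrad x s)).exists_infDist_eq_dist (hne s) x
    have hgzs : g z s = 0 :=
      grad_zero_at_min (fun x => f x s) (fun x => g x s) (fun x => hgrad x s) z hzS
    have hgzt : ‖g z t‖ ≤ L11 * |s - t| := by
      have h0 := hlipt z t s
      rw [hgzs, sub_zero, abs_sub_comm] at h0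
      exact h0
    have h1 : Metric.infDist x {z' | ∀ y, f z' t ≤ f y t}
        ≤ Metric.infDist z {z' | ∀ y, f z' t ≤ f y t} + dist x z :=
      Metric.infDist_le_infDist_add_dist
    have h2 : Metric.infDist z {z' | ∀ y, f z' t ≤ f y t} ≤ L11 / μ * |s - t| := by
      have h3 := hqg t z
      have h4 : 2 / μ * (f z t - ⨅ y, f y t) ≤ (L11 / μ * |s - t|) ^ 2 := by
        have h5 := hpl z t
        have h6 : ‖g z t‖ ^ 2 ≤ (L11 * |s - t|) ^ 2 := by
          apply pow_le_pow_left₀ (norm_nonneg _) hgzt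
        have h7 : f z t - (⨅ y, f y t) ≤ 1 / (2 * μ) * (L11 * |s - t|) ^ 2 := by
          calc f z t - (⨅ y, f y t) ≤ 1 / (2 * μ) * ‖g z t‖ ^ 2 := h5
            _ ≤ 1 / (2 * μ) * (L11 * |s - t|) ^ 2 := by
                apply mul_le_mul_of_nonneg_left h6 (by positivity)
        have hμ2 : (0:ℝ) < 2 / μ := by positivity
        calc 2 / μ * (f z t - ⨅ y, f y t)
            ≤ 2 / μ * (1 / (2 * μ) * (L11 * |s - t|) ^ 2) :=
              mul_le_mul_of_nonneg_left h7 hμ2.le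
          _ = (L11 / μ * |s - t|) ^ 2 := by field_simp
      calc Metric.infDist z {z' | ∀ y, f z' t ≤ f y t}
          ≤ Real.sqrt (2 / μ * (f z t - ⨅ y, f y t)) := h3
        _ ≤ Real.sqrt ((L11 / μ * |s - t|) ^ 2) := Real.sqrt_le_sqrt h4
        _ = L11 / μ * |s - t| := Real.sqrt_sq (by positivity)
    calc Metric.infDist x {z' | ∀ y, f z' t ≤ f y t}
        ≤ Metric.infDist z {z' | ∀ y, f z' t ≤ f y t} + dist x z := h1
      _ ≤ L11 / μ * |s - t| + dist x z := by linarith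
      _ = Metric.infDist x {z' | ∀ y, f z' s ≤ f y s} + L11 / μ * |s - t| := by
          rw [hzd]; ring
  -- contraction through the C corrector steps
  have hcontr : ∀ (t : ℝ) (z : EuclideanSpace ℝ (Fin n)),
      Metric.infDist ((fun y => y - α • g y t)^[C] z) {z' | ∀ y, f z' t ≤ f y t}
        ≤ ρ * Metric.infDist z {z' | ∀ y, f z' t ≤ f y t} := by
    intro t z
    have h1 := hqg t ((fun y => y - α • g y t)^[C] z)
    have h2 := gd_iter_gap (fun x => f x t) (fun x => g x t) μ L hμ hμL
      (fun x => hgrad x t) (fun x y => hlipx x y t) (fun x => hpl x t) (hne t)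
      α hα0 hαL C z
    rw [← hθdef] at h2
    have h3 := hgap t z
    have h4 : 2 / μ * (f ((fun y => y - α • g y t)^[C] z) t - ⨅ y, f y t)
        ≤ (L / μ * θ ^ C) * Metric.infDist z {z' | ∀ y, f z' t ≤ f y t} ^ 2 := by
      have h5 : θ ^ C * (f z t - ⨅ y, f y t)
          ≤ θ ^ C * (L / 2 * Metric.infDist z {z' | ∀ y, f z' t ≤ f y t} ^ 2) :=
        mul_le_mul_of_nonneg_left h3 (pow_nonneg hθ0 C)
      have hμ2 : (0:ℝ) ≤ 2 / μ := by positivity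
      calc 2 / μ * (f ((fun y => y - α • g y t)^[C] z) t - ⨅ y, f y t)
          ≤ 2 / μ * (θ ^ C * (L / 2 * Metric.infDist z {z' | ∀ y, f z' t ≤ f y t} ^ 2)) := by
            apply mul_le_mul_of_nonneg_left (le_trans h2 h5) hμ2
        _ = (L / μ * θ ^ C) * Metric.infDist z {z' | ∀ y, f z' t ≤ f y t} ^ 2 := by
            field_simp
    calc Metric.infDist ((fun y => y - α • g y t)^[C] z) {z' | ∀ y, f z' t ≤ f y t}
        ≤ Real.sqrt (2 / μ * (f ((fun y => y - α • g y t)^[C] z) t - ⨅ y, f y t)) := h1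
      _ ≤ Real.sqrt ((L / μ * θ ^ C) * Metric.infDist z {z' | ∀ y, f z' t ≤ f y t} ^ 2) :=
          Real.sqrt_le_sqrt h4
      _ = ρ * Metric.infDist z {z' | ∀ y, f z' t ≤ f y t} := by
          rw [Real.sqrt_mul (by positivity), Real.sqrt_sq Metric.infDist_nonneg, hρdef]
  -- the one-step recursion for the tracking error
  obtain ⟨d, hddef⟩ : ∃ d : ℕ → ℝ, d = fun k : ℕ =>
      Metric.infDist (xhat k) {x | ∀ y, f x ((k : ℝ) * h) ≤ f y ((k : ℝ) * h)} := ⟨_, rfl⟩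
  have hd0 : ∀ k, 0 ≤ d k := by
    intro k; rw [hddef]; exact Metric.infDist_nonneg
  have hrec : ∀ m : ℕ, d (m + 2) ≤ ρ * d (m + 1) + B * h := by
    intro m
    have hxc : xc (m + 1) = (fun y => y - α • g y (((m + 1 : ℕ) : ℝ) * h))^[C] (xhat (m + 1)) :=
      hcorr (m + 1) (by omega)
    have h1 : d (m + 2) ≤ Metric.infDist (xc (m + 1))
        {x | ∀ y, f x (((m + 2 : ℕ) : ℝ) * h) ≤ f y (((m + 2 : ℕ) : ℝ) * h)}
        + dist (xhat (m + 2)) (xc (m + 1)) := by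
      rw [hddef]
      exact Metric.infDist_le_infDist_add_dist
    have h2 : dist (xhat (m + 2)) (xc (m + 1)) ≤ v * h := by
      have := hacc (m + 2) (by omega)
      rw [dist_eq_norm]
      simpa using this
    have h3 : Metric.infDist (xc (m + 1))
        {x | ∀ y, f x (((m + 2 : ℕ) : ℝ) * h) ≤ f y (((m + 2 : ℕ) : ℝ) * h)}
        ≤ Metric.infDist (xc (m + 1))
          {x | ∀ y, f x (((m + 1 : ℕ) : ℝ) * h) ≤ f y (((m + 1 : ℕ) : ℝ) * h)}
          + L11 / μ * h := by
      have := hdrift (((m + 1 : ℕ) : ℝ) * h) (((m + 2 : ℕ) : ℝ) * h) (xc (m + 1))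
      have habs : |((m + 1 : ℕ) : ℝ) * h - ((m + 2 : ℕ) : ℝ) * h| = h := by
        have he : ((m + 1 : ℕ) : ℝ) * h - ((m + 2 : ℕ) : ℝ) * h = -h := by
          push_cast; ring
        rw [he, abs_neg, abs_of_pos hh]
      rwa [habs] at this
    have h4 : Metric.infDist (xc (m + 1))
        {x | ∀ y, f x (((m + 1 : ℕ) : ℝ) * h) ≤ f y (((m + 1 : ℕ) : ℝ) * h)}
        ≤ ρ * d (m + 1) := by
      rw [hxc, hddef]
      exact hcontr (((m + 1 : ℕ) : ℝ) * h) (xhat (m + 1))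
    rw [hBdef]
    calc d (m + 2) ≤ _ + dist (xhat (m + 2)) (xc (m + 1)) := h1
      _ ≤ (ρ * d (m + 1) + L11 / μ * h) + v * h := by linarith
      _ = ρ * d (m + 1) + (v + L11 / μ) * h := by ring
  -- explicit geometric bound
  have hXeq : (1 - ρ) * (B * h / (1 - ρ)) = B * h := by field_simp
  have hgeo : ∀ m : ℕ, d (m + 1) ≤ ρ ^ m * d 1 + B * h / (1 - ρ) := by
    intro m
    induction m with
    | zero =>
      have : 0 ≤ B * h / (1 - ρ) := by positivity
      simpa using by linarith [this]
    | succ j ih =>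
      calc d (j + 2) ≤ ρ * d (j + 1) + B * h := hrec j
        _ ≤ ρ * (ρ ^ j * d 1 + B * h / (1 - ρ)) + B * h :=
            by nlinarith [mul_le_mul_of_nonneg_left ih hρ0]
        _ = ρ ^ (j + 1) * d 1 + (ρ * (B * h / (1 - ρ)) + B * h) := by ring
        _ = ρ ^ (j + 1) * d 1 + B * h / (1 - ρ) := by
            have : ρ * (B * h / (1 - ρ)) + B * h = B * h / (1 - ρ) := by
              nlinarith [hXeq]
            rw [this]
  -- eventual bounds
  have hev : ∀ ε : ℝ, 0 < ε → ∀ᶠ k in Filter.atTop, d k ≤ B * h / (1 - ρ) + ε := by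
    intro ε hε
    have htend : Filter.Tendsto (fun m : ℕ => ρ ^ m * d 1) Filter.atTop (nhds 0) := by
      simpa using (tendsto_pow_atTop_nhds_zero_of_lt_one hρ0 hρ1).mul_const (d 1)
    have hsmall : ∀ᶠ m in Filter.atTop, ρ ^ m * d 1 < ε :=
      htend.eventually (gt_mem_nhds hε)
    rw [Filter.eventually_atTop] at hsmall ⊢
    obtain ⟨M, hM⟩ := hsmall
    refine ⟨M + 1, fun k hk => ?_⟩
    have hk1 : k = (k - 1) + 1 := by omega
    have hkM : M ≤ k - 1 := by omega
    calc d k = d ((k - 1) + 1) := by rw [← hk1]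
      _ ≤ ρ ^ (k - 1) * d 1 + B * h / (1 - ρ) := hgeo (k - 1)
      _ ≤ B * h / (1 - ρ) + ε := by linarith [hM (k - 1) hkM]
  have hcobd : Filter.IsCoboundedUnder (· ≤ ·) Filter.atTop d :=
    Filter.IsCoboundedUnder.of_frequently_ge (Filter.Frequently.of_forall fun k => hd0 k)
  have hlim1 : Filter.limsup d Filter.atTop ≤ B * h / (1 - ρ) := by
    apply le_of_forall_pos_le_add
    intro ε hε
    exact Filter.limsup_le_of_le hcobd (hev ε hε)
  constructor
  · have : B / (1 - ρ) * h = B * h / (1 - ρ) := by ring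
    rw [this, ← hddef]
    exact hlim1
  · -- second limsup
    have hgapd : ∀ k : ℕ, f (xhat k) ((k : ℝ) * h) - (⨅ y, f y ((k : ℝ) * h))
        ≤ L / 2 * d k ^ 2 := by
      intro k
      rw [hddef]
      exact hgap ((k : ℝ) * h) (xhat k)
    have hcobd2 : Filter.IsCoboundedUnder (· ≤ ·) Filter.atTop
        (fun k : ℕ => f (xhat k) ((k : ℝ) * h) - ⨅ y, f y ((k : ℝ) * h)) :=
      Filter.IsCoboundedUnder.of_frequently_ge
        (Filter.Frequently.of_forall fun k => hgapnn _ _)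
    have hXfin : L / 2 * (B / (1 - ρ)) ^ 2 * h ^ 2 = L / 2 * (B * h / (1 - ρ)) ^ 2 := by
      ring
    rw [hXfin]
    apply le_of_forall_pos_le_add
    intro ε hε
    obtain ⟨R, hRdef⟩ : ∃ R : ℝ, R = B * h / (1 - ρ) := ⟨_, rfl⟩
    have hR0 : 0 ≤ R := by rw [hRdef]; positivity
    obtain ⟨ε₁, hε₁def⟩ : ∃ ε₁ : ℝ, ε₁ = min 1 (ε / (L * (R + 1))) := ⟨_, rfl⟩
    have hε₁pos : 0 < ε₁ := by
      rw [hε₁def]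
      apply lt_min one_pos
      positivity
    have hε₁le1 : ε₁ ≤ 1 := by rw [hε₁def]; exact min_le_left _ _
    have hε₁leε : L * (R + 1) * ε₁ ≤ ε := by
      have h1 : ε₁ ≤ ε / (L * (R + 1)) := by rw [hε₁def]; exact min_le_right _ _
      have h2 : 0 < L * (R + 1) := by positivity
      rw [le_div_iff₀ h2] at h1
      linarith [h1]
    have heb : ∀ᶠ k in Filter.atTop,
        f (xhat k) ((k : ℝ) * h) - (⨅ y, f y ((k : ℝ) * h))
          ≤ L / 2 * (B * h / (1 - ρ)) ^ 2 + ε := by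
      filter_upwards [hev ε₁ hε₁pos] with k hk
      have h1 : d k ≤ R + ε₁ := by rw [hRdef]; exact hk
      have h2 : d k ^ 2 ≤ (R + ε₁) ^ 2 := by
        apply pow_le_pow_left₀ (hd0 k) h1
      calc f (xhat k) ((k : ℝ) * h) - (⨅ y, f y ((k : ℝ) * h))
          ≤ L / 2 * d k ^ 2 := hgapd k
        _ ≤ L / 2 * (R + ε₁) ^ 2 := by nlinarith [h2]
        _ ≤ L / 2 * R ^ 2 + ε := by nlinarith [hε₁leε, hε₁le1, hε₁pos, hR0, hL]
        _ = L / 2 * (B * h / (1 - ρ)) ^ 2 + ε := by rw [hRdef]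
    exact Filter.limsup_le_of_le hcobd2 heb
end

section
/- Under the same hypotheses as the non-convex finite-horizon bound — E a real inner product space, h > 0, t_k = k·h, f : E × ℝ → ℝ differentiable in x with ‖∇_x f(x;t) − ∇_x f(y;t)‖ ≤ L_{2,0}‖x−y‖, |f(x;t) − f(y;t)| ≤ L_{1,0}‖x−y‖, |f(x;s) − f(x;t)| ≤ L_{0,1}|s−t|, inf_{(x,t)} f(x;t) > −∞, step size α ∈ (0, 2/L_{2,0}), C ≥ 1, v ≥ 0, and sequences with ‖x̂_k − x_{k−1}‖ ≤ vh and x_k = G_k^C(x̂_k), G_k(y) = y − α∇_x f(y;t_k) — it holds that limsup_{K→∞} (1/K)·Σ_{k=1}^{K} ‖∇_x f(x̂_k; t_k)‖ ≤ √( (L_{1,0}·v + L_{0,1})·h / (α − (L_{2,0}/2)α²) ). -/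
open Filter Finset

set_option maxHeartbeats 1000000


/-- Asymptotic bound for the SHARP algorithm on (possibly non-convex)
objectives: the averaged gradient norms at the predictions satisfy
`limsup_K (1/K)Σ_{k=1}^K ‖∇_x f(x̂_k;t_k)‖ ≤ √((L₁₀v + L₀₁)h/(α − (L₂₀/2)α²))`. -/
theorem sharp_nonconvex_tracking_error
    {E : Type*} [NormedAddCommGroup E] [InnerProductSpace ℝ E]
    (h : ℝ) (hh : 0 < h)
    (f : E → ℝ → ℝ) (g : E → ℝ → E)
    (hgrad : ∀ (x : E) (t : ℝ), HasFDerivAt (fun y => f y t) (innerSL ℝ (g x t)) x)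
    (L20 L10 L01 : ℝ) (hL20 : 0 < L20)
    (hlipg : ∀ (x y : E) (t : ℝ), ‖g x t - g y t‖ ≤ L20 * ‖x - y‖)
    (hlipfx : ∀ (x y : E) (t : ℝ), |f x t - f y t| ≤ L10 * ‖x - y‖)
    (hlipft : ∀ (x : E) (s t : ℝ), |f x s - f x t| ≤ L01 * |s - t|)
    (finf : ℝ) (hfinf : ∀ (x : E) (t : ℝ), finf ≤ f x t)
    (α : ℝ) (hα0 : 0 < α) (hα2 : α < 2 / L20)
    (C : ℕ) (hC : 1 ≤ C) (v : ℝ) (hv : 0 ≤ v)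
    (xhat xc : ℕ → E)
    (hacc : ∀ k : ℕ, 1 ≤ k → ‖xhat k - xc (k - 1)‖ ≤ v * h)
    (hcorr : ∀ k : ℕ, 1 ≤ k →
      xc k = (fun y => y - α • g y ((k : ℝ) * h))^[C] (xhat k)) :
    Filter.limsup (fun K : ℕ =>
        (1 / (K : ℝ)) * ∑ k ∈ Finset.Icc 1 K, ‖g (xhat k) ((k : ℝ) * h)‖)
      Filter.atTop
      ≤ Real.sqrt ((L10 * v + L01) * h / (α - L20 / 2 * α ^ 2)) := by
  rcases subsingleton_or_nontrivial E with hE | hE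
  · -- trivial space: all gradients vanish
    have hg0 : ∀ (x : E) (t : ℝ), g x t = 0 := fun x t => Subsingleton.elim _ _
    have heq : (fun K : ℕ =>
        (1 / (K : ℝ)) * ∑ k ∈ Finset.Icc 1 K, ‖g (xhat k) ((k : ℝ) * h)‖)
        = fun _ : ℕ => (0 : ℝ) := by
      funext K; simp [hg0]
    rw [heq, Filter.limsup_const]
    exact Real.sqrt_nonneg _
  -- main case
  set ρ : ℝ := α - L20 / 2 * α ^ 2 with hρdef
  have hρ : 0 < ρ := by
    have h1 : α * L20 < 2 := (lt_div_iff₀ hL20).mp hα2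
    have : L20 / 2 * α ^ 2 < α := by nlinarith
    simpa [hρdef] using sub_pos.mpr this
  -- nonnegativity of the Lipschitz constants
  obtain ⟨p, q, hpq⟩ := exists_pair_ne E
  have hL10 : 0 ≤ L10 := by
    have h1 := hlipfx p q 0
    have h2 : 0 < ‖p - q‖ := by
      rw [norm_pos_iff, sub_ne_zero]; exact hpq
    nlinarith [abs_nonneg (f p 0 - f q 0)]
  have hL01 : 0 ≤ L01 := by
    have h1 := hlipft p 0 1
    have h2 : |(0:ℝ) - 1| = 1 := by norm_num
    rw [h2, mul_one] at h1
    exact le_trans (abs_nonneg _) h1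
  -- descent lemma
  have hdescent : ∀ (y : E) (t : ℝ),
      f (y - α • g y t) t ≤ f y t - ρ * ‖g y t‖ ^ 2 := by
    intro y t
    set d : E := -(α • g y t) with hd
    have hφ : ∀ s : ℝ, HasDerivAt (fun s : ℝ => f (y + s • d) t)
        ((inner ℝ (g (y + s • d) t) d : ℝ)) s := by
      intro s
      have hline : HasDerivAt (fun s : ℝ => y + s • d) d s := by
        simpa using ((hasDerivAt_id s).smul_const d).const_add y
      have := (hgrad (y + s • d) t).comp_hasDerivAt s hline
      exact this
    set ψ : ℝ → ℝ := fun s =>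
      f y t + s * (inner ℝ (g y t) d : ℝ) + L20 * ‖d‖ ^ 2 / 2 * s ^ 2 - f (y + s • d) t with hψdef
    have hψ : ∀ s : ℝ, HasDerivAt ψ
        ((inner ℝ (g y t) d : ℝ) + L20 * ‖d‖ ^ 2 * s - (inner ℝ (g (y + s • d) t) d : ℝ)) s := by
      intro s
      have h1 : HasDerivAt (fun s : ℝ =>
          f y t + s * (inner ℝ (g y t) d : ℝ) + L20 * ‖d‖ ^ 2 / 2 * s ^ 2)
          ((inner ℝ (g y t) d : ℝ) + L20 * ‖d‖ ^ 2 * s) s := by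
        have h2 := ((hasDerivAt_id s).mul_const ((inner ℝ (g y t) d : ℝ))).const_add (f y t)
        have h3 := (hasDerivAt_pow 2 s).const_mul (L20 * ‖d‖ ^ 2 / 2)
        convert h2.add h3 using 1
        · rfl
        · rfl
        · rfl
        · norm_num
          ring
      exact h1.sub (hφ s)
    have hder : ∀ s : ℝ, 0 ≤ s →
        0 ≤ (inner ℝ (g y t) d : ℝ) + L20 * ‖d‖ ^ 2 * s - (inner ℝ (g (y + s • d) t) d : ℝ) := by
      intro s hs
      have h1 : (inner ℝ (g (y + s • d) t - g y t) d : ℝ) ≤ ‖g (y + s • d) t - g y t‖ * ‖d‖ :=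
        real_inner_le_norm _ _
      have h2 : ‖g (y + s • d) t - g y t‖ ≤ L20 * (s * ‖d‖) := by
        have := hlipg (y + s • d) y t
        simpa [norm_smul, abs_of_nonneg hs] using this
      rw [inner_sub_left] at h1
      nlinarith [norm_nonneg d, norm_nonneg (g (y + s • d) t - g y t)]
    have hmono : MonotoneOn ψ (Set.Icc (0:ℝ) 1) := by
      apply monotoneOn_of_deriv_nonneg (convex_Icc 0 1)
      · exact fun s _ => (hψ s).continuousAt.continuousWithinAt
      · intro s _
        exact (hψ s).differentiableAt.differentiableWithinAt
      · intro s hs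
        rw [interior_Icc] at hs
        rw [(hψ s).deriv]
        exact hder s hs.1.le
    have h01 : ψ 0 ≤ ψ 1 :=
      hmono (Set.mem_Icc.mpr ⟨le_refl 0, zero_le_one⟩)
        (Set.mem_Icc.mpr ⟨zero_le_one, le_refl 1⟩) zero_le_one
    have hψ0 : ψ 0 = 0 := by simp [hψdef]
    have hinner : (inner ℝ (g y t) d : ℝ) = -(α * ‖g y t‖ ^ 2) := by
      rw [hd, inner_neg_right, real_inner_smul_right, real_inner_self_eq_norm_sq]
    have hnd : ‖d‖ ^ 2 = α ^ 2 * ‖g y t‖ ^ 2 := by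
      rw [hd, norm_neg, norm_smul, Real.norm_eq_abs, abs_of_pos hα0, mul_pow]
    have hy1 : y + (1:ℝ) • d = y - α • g y t := by
      rw [hd]; simp [sub_eq_add_neg]
    rw [hψ0, hψdef] at h01
    simp only [hy1] at h01
    rw [hinner, hnd] at h01
    have hexp : ρ * ‖g y t‖ ^ 2 = α * ‖g y t‖ ^ 2 - L20 / 2 * α ^ 2 * ‖g y t‖ ^ 2 := by
      rw [hρdef]; ring
    rw [hexp]
    linarith [h01]
  -- iterates do not increase f
  have hiter : ∀ (t : ℝ) (n : ℕ) (y : E),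
      f ((fun y => y - α • g y t)^[n] y) t ≤ f y t := by
    intro t n
    induction n with
    | zero => intro y; simp
    | succ n ih =>
      intro y
      rw [Function.iterate_succ_apply]
      refine le_trans (ih _) ?_
      have := hdescent y t
      nlinarith [mul_nonneg hρ.le (sq_nonneg ‖g y t‖)]
  have hkey : ∀ (t : ℝ) (y : E),
      f ((fun y => y - α • g y t)^[C] y) t ≤ f y t - ρ * ‖g y t‖ ^ 2 := by
    intro t y
    obtain ⟨m, rfl⟩ : ∃ m, C = m + 1 := ⟨C - 1, (Nat.succ_pred_eq_of_pos hC).symm⟩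
    rw [Function.iterate_succ_apply]
    exact le_trans (hiter t m _) (hdescent y t)
  -- notation
  set a : ℕ → ℝ := fun k => f (xhat k) ((k : ℝ) * h) with hadef
  set G : ℕ → ℝ := fun k => ‖g (xhat k) ((k : ℝ) * h)‖ with hGdef
  set B : ℝ := (L10 * v + L01) * h with hBdef
  have hB : 0 ≤ B := by
    have : 0 ≤ L10 * v + L01 := by positivity
    exact mul_nonneg this hh.le
  -- per-step estimate
  have hstep : ∀ k : ℕ, 1 ≤ k → a (k + 1) ≤ a k - ρ * G k ^ 2 + B := by
    intro k hk
    have h1 : f (xc k) ((k : ℝ) * h) ≤ a k - ρ * G k ^ 2 := by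
      rw [hcorr k hk]
      exact hkey _ _
    have hn : ‖xhat (k + 1) - xc k‖ ≤ v * h := by
      have := hacc (k + 1) (by omega)
      simpa using this
    have h2 : |f (xhat (k + 1)) ((k : ℝ) * h) - f (xc k) ((k : ℝ) * h)| ≤ L10 * (v * h) :=
      le_trans (hlipfx _ _ _) (mul_le_mul_of_nonneg_left hn hL10)
    have h3 : |f (xhat (k + 1)) (((k : ℝ) + 1) * h) - f (xhat (k + 1)) ((k : ℝ) * h)|
        ≤ L01 * h := by
      have habs : |((k : ℝ) + 1) * h - (k : ℝ) * h| = h := by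
        have : ((k : ℝ) + 1) * h - (k : ℝ) * h = h := by ring
        rw [this, abs_of_pos hh]
      have := hlipft (xhat (k + 1)) (((k : ℝ) + 1) * h) ((k : ℝ) * h)
      rwa [habs] at this
    have h4 := (abs_le.mp h2).2
    have h5 := (abs_le.mp h3).2
    have hcast : a (k + 1) = f (xhat (k + 1)) (((k : ℝ) + 1) * h) := by
      simp [hadef]
    rw [hcast, hBdef]
    nlinarith [h1, h4, h5]
  -- telescoping sum
  have hsum : ∀ K : ℕ, ρ * ∑ k ∈ Icc 1 K, G k ^ 2 ≤ a 1 - a (K + 1) + K * B := by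
    intro K
    induction K with
    | zero => simp
    | succ K ih =>
      rw [Finset.sum_Icc_succ_top (by omega : 1 ≤ K + 1), mul_add]
      have h1 := hstep (K + 1) (by omega)
      push_cast
      push_cast at ih
      linarith
  have hsum' : ∀ K : ℕ, ρ * ∑ k ∈ Icc 1 K, G k ^ 2 ≤ (a 1 - finf) + K * B := by
    intro K
    have := hfinf (xhat (K + 1)) (((K + 1 : ℕ) : ℝ) * h)
    have h2 : finf ≤ a (K + 1) := this
    linarith [hsum K]
  set D : ℝ := (a 1 - finf) / ρ with hDdef
  have hD : 0 ≤ D := by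
    have : finf ≤ a 1 := hfinf _ _
    have h2 : 0 ≤ a 1 - finf := by linarith
    positivity
  -- the comparison sequence
  set w : ℕ → ℝ := fun K => Real.sqrt (B / ρ + D / (K : ℝ)) with hwdef
  have hle : ∀ K : ℕ, 1 ≤ K →
      (1 / (K : ℝ)) * ∑ k ∈ Icc 1 K, G k ≤ w K := by
    intro K hK
    have hKpos : (0 : ℝ) < (K : ℝ) := by exact_mod_cast hK
    apply Real.le_sqrt_of_sq_le
    have hcs : (∑ k ∈ Icc 1 K, G k) ^ 2 ≤ (K : ℝ) * ∑ k ∈ Icc 1 K, G k ^ 2 := by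
      have := sq_sum_le_card_mul_sum_sq (s := Icc 1 K) (f := G)
      have hcard : (#(Icc 1 K) : ℝ) = (K : ℝ) := by
        rw [Nat.card_Icc]; push_cast; ring
      calc (∑ k ∈ Icc 1 K, G k) ^ 2 ≤ (#(Icc 1 K) : ℝ) * ∑ k ∈ Icc 1 K, G k ^ 2 := by
            exact_mod_cast this
        _ = (K : ℝ) * ∑ k ∈ Icc 1 K, G k ^ 2 := by rw [hcard]
    have hDρ : D * ρ = a 1 - finf := div_mul_cancel₀ _ hρ.ne'
    have hgoal : ((1 / (K : ℝ)) * ∑ k ∈ Icc 1 K, G k) ^ 2 * (ρ * (K : ℝ))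
        ≤ (B / ρ + D / (K : ℝ)) * (ρ * (K : ℝ)) := by
      have hlhs : ((1 / (K : ℝ)) * ∑ k ∈ Icc 1 K, G k) ^ 2 * (ρ * (K : ℝ))
          = (∑ k ∈ Icc 1 K, G k) ^ 2 * ρ / (K : ℝ) := by
        field_simp
      have hrhs : (B / ρ + D / (K : ℝ)) * (ρ * (K : ℝ)) = B * (K : ℝ) + D * ρ := by
        field_simp
      rw [hlhs, hrhs, div_le_iff₀ hKpos, hDρ]
      calc (∑ k ∈ Icc 1 K, G k) ^ 2 * ρ
          ≤ ((K : ℝ) * ∑ k ∈ Icc 1 K, G k ^ 2) * ρ :=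
            mul_le_mul_of_nonneg_right hcs hρ.le
        _ = (K : ℝ) * (ρ * ∑ k ∈ Icc 1 K, G k ^ 2) := by ring
        _ ≤ (K : ℝ) * ((a 1 - finf) + (K : ℝ) * B) :=
            mul_le_mul_of_nonneg_left (hsum' K) hKpos.le
        _ = (B * (K : ℝ) + (a 1 - finf)) * (K : ℝ) := by ring
    exact le_of_mul_le_mul_right hgoal (by positivity)
  -- limit of the comparison sequence
  have hwt : Tendsto w atTop (nhds (Real.sqrt (B / ρ))) := by
    have h1 : Tendsto (fun K : ℕ => B / ρ + D / (K : ℝ)) atTop (nhds (B / ρ + 0)) := by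
      exact tendsto_const_nhds.add (tendsto_const_nhds.div_atTop tendsto_natCast_atTop_atTop)
    rw [add_zero] at h1
    exact (Real.continuous_sqrt.tendsto _).comp h1
  have htarget : Real.sqrt ((L10 * v + L01) * h / ρ) = Real.sqrt (B / ρ) := by
    rw [hBdef]
  rw [htarget]
  have hub : Filter.limsup w atTop = Real.sqrt (B / ρ) := hwt.limsup_eq
  rw [← hub]
  apply Filter.limsup_le_limsup
  · filter_upwards [eventually_ge_atTop 1] with K hK
    exact hle K hK
  · refine Filter.isCoboundedUnder_le_of_le Filter.atTop (x := 0) fun K => ?_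
    have h0 : 0 ≤ ∑ k ∈ Icc 1 K, G k := Finset.sum_nonneg fun k _ => norm_nonneg _
    have h1 : 0 ≤ (1 / (K : ℝ)) := by positivity
    exact mul_nonneg h1 h0
  · exact hwt.isBoundedUnder_le
end
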